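/- For the MPS defined below, define for each bond i ∈ {0,1,…,N} the left tensor L^{[i]} : (Fin i → Fin d) → Matrix (Fin 1) (Fin χ(i)) ℂ by L^{[i]}(σ₁,…,σ_i) = Λ^{[0]} Γ^{[1]σ₁} Λ^{[1]} Γ^{[2]σ₂} ⋯ Λ^{[i−1]} Γ^{[i]σ_i}, and the right tensor R^{[i]} : (σ_{i+1},…,σ_N) → Matrix (Fin χ(i)) (Fin 1) ℂ by R^{[i]}(σ_{i+1},…,σ_N) = Γ^{[i+1]σ_{i+1}} Λ^{[i+1]} ⋯ Γ^{[N]σ_N} Λ^{[N]} (with L^{[0]} and R^{[N]} the 1×1 identity). Then the MPS is in canonical form if and only if for every i ∈ {0,1,…,N}: Σ over all (σ₁,…,σ_i) of (L^{[i]})ᴴ L^{[i]} = I_{χ(i)} and Σ over all (σ_{i+1},…,σ_N) of R^{[i]} (R^{[i]})ᴴ = I_{χ(i)}. -/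
import Mathlib


open Matrix

/-- Canonical form: for every site `i + 1` (`i < N`), with `A = Λ i * Γ i s` and
`B = Γ i s * Λ (i+1)`, one has `∑ s, Aᴴ A = 1` and `∑ s, B Bᴴ = 1`. -/
def IsCanonicalMPS {d : ℕ} (N : ℕ) (χ : ℕ → ℕ)
    (Γ : (i : ℕ) → Fin d → Matrix (Fin (χ i)) (Fin (χ (i + 1))) ℂ)
    (Λ : (i : ℕ) → Matrix (Fin (χ i)) (Fin (χ i)) ℂ) : Prop :=
  ∀ i < N,
    (∑ s : Fin d, (Λ i * Γ i s)ᴴ * (Λ i * Γ i s) = 1) ∧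
    (∑ s : Fin d, (Γ i s * Λ (i + 1)) * (Γ i s * Λ (i + 1))ᴴ = 1)

/-- Left partial product `L^{[i]} = Λ⁰ Γ¹ Λ¹ Γ² ⋯ Λ^{i−1} Γⁱ` (with `σ` given as a function
on all of `ℕ`; the tensor `Γ k` belongs to site `k + 1`). -/
noncomputable def mpsLW {d : ℕ} (χ : ℕ → ℕ)
    (Γ : (i : ℕ) → Fin d → Matrix (Fin (χ i)) (Fin (χ (i + 1))) ℂ)
    (Λ : (i : ℕ) → Matrix (Fin (χ i)) (Fin (χ i)) ℂ) :
    (i : ℕ) → (ℕ → Fin d) → Matrix (Fin (χ 0)) (Fin (χ i)) ℂ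
  | 0, _ => Λ 0
  | (i + 1), σ => mpsLW χ Γ Λ i σ * (Λ i * Γ i (σ i))

/-- The left tensor `L^{[i]} : (σ₁, …, σ_i) ↦ Λ⁰ Γ^{[1]σ₁} Λ¹ ⋯ Λ^{i−1} Γ^{[i]σ_i}`. -/
noncomputable def mpsL {d : ℕ} [NeZero d] (χ : ℕ → ℕ)
    (Γ : (i : ℕ) → Fin d → Matrix (Fin (χ i)) (Fin (χ (i + 1))) ℂ)
    (Λ : (i : ℕ) → Matrix (Fin (χ i)) (Fin (χ i)) ℂ)
    (i : ℕ) (σ : Fin i → Fin d) : Matrix (Fin (χ 0)) (Fin (χ i)) ℂ :=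
  mpsLW χ Γ Λ i (fun k => if h : k < i then σ ⟨k, h⟩ else 0)

/-- Right partial product of `k` factors starting at bond `a`:
`Γ^{[a+1]} Λ^{a+1} Γ^{[a+2]} Λ^{a+2} ⋯ Γ^{[a+k]} Λ^{a+k}`. -/
noncomputable def mpsRW {d : ℕ} (χ : ℕ → ℕ)
    (Γ : (i : ℕ) → Fin d → Matrix (Fin (χ i)) (Fin (χ (i + 1))) ℂ)
    (Λ : (i : ℕ) → Matrix (Fin (χ i)) (Fin (χ i)) ℂ) (a : ℕ) :
    (k : ℕ) → (ℕ → Fin d) → Matrix (Fin (χ a)) (Fin (χ (a + k))) ℂ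
  | 0, _ => (1 : Matrix (Fin (χ a)) (Fin (χ a)) ℂ)
  | (k + 1), σ => mpsRW χ Γ Λ a k σ * (Γ (a + k) (σ (a + k)) * Λ (a + k + 1))

/-- The right tensor `R^{[i]} : (σ_{i+1}, …, σ_N) ↦ Γ^{[i+1]σ_{i+1}} Λ^{i+1} ⋯ Γ^{[N]σ_N} Λᴺ`
(for `i ≤ N` one has `i + (N − i) = N`). -/
noncomputable def mpsR {d : ℕ} [NeZero d] (χ : ℕ → ℕ)
    (Γ : (i : ℕ) → Fin d → Matrix (Fin (χ i)) (Fin (χ (i + 1))) ℂ)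
    (Λ : (i : ℕ) → Matrix (Fin (χ i)) (Fin (χ i)) ℂ)
    (N i : ℕ) (τ : Fin (N - i) → Fin d) : Matrix (Fin (χ i)) (Fin (χ (i + (N - i)))) ℂ :=
  mpsRW χ Γ Λ i (N - i) (fun k => if h : k - i < N - i then τ ⟨k - i, h⟩ else 0)

namespace MPSAux

def mcast {m n m' n' : ℕ} (hm : m = m') (hn : n = n')
    (M : Matrix (Fin m) (Fin n) ℂ) : Matrix (Fin m') (Fin n') ℂ :=
  M.submatrix (Fin.cast hm.symm) (Fin.cast hn.symm)

@[simp] lemma mcast_rfl {m n : ℕ} (M : Matrix (Fin m) (Fin n) ℂ) :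
    mcast rfl rfl M = M := rfl

lemma mcast_mul {m n p m' n' p' : ℕ} (hm : m = m') (hn : n = n') (hp : p = p')
    (M : Matrix (Fin m) (Fin n) ℂ) (P : Matrix (Fin n) (Fin p) ℂ) :
    mcast hm hp (M * P) = mcast hm hn M * mcast hn hp P := by
  subst hm hn hp; rfl

lemma mcast_mul_conjTranspose_self {m n n' : ℕ} (hn : n = n')
    (M : Matrix (Fin m) (Fin n) ℂ) :
    mcast rfl hn M * (mcast rfl hn M)ᴴ = M * Mᴴ := by
  subst hn; rfl

variable {d : ℕ} (χ : ℕ → ℕ)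
  (Γ : (i : ℕ) → Fin d → Matrix (Fin (χ i)) (Fin (χ (i + 1))) ℂ)
  (Λ : (i : ℕ) → Matrix (Fin (χ i)) (Fin (χ i)) ℂ)

lemma mpsLW_congr : ∀ (i : ℕ) {σ₁ σ₂ : ℕ → Fin d}, (∀ n < i, σ₁ n = σ₂ n) →
    mpsLW χ Γ Λ i σ₁ = mpsLW χ Γ Λ i σ₂
  | 0, _, _, _ => rfl
  | (i+1), σ₁, σ₂, h => by
      show mpsLW χ Γ Λ i σ₁ * _ = mpsLW χ Γ Λ i σ₂ * _
      rw [mpsLW_congr i (fun n hn => h n (by omega)), h i (by omega)]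

lemma mpsRW_congr (a : ℕ) : ∀ (k : ℕ) {σ₁ σ₂ : ℕ → Fin d},
    (∀ n, a ≤ n → n < a + k → σ₁ n = σ₂ n) →
    mpsRW χ Γ Λ a k σ₁ = mpsRW χ Γ Λ a k σ₂
  | 0, _, _, _ => rfl
  | (k+1), σ₁, σ₂, h => by
      show mpsRW χ Γ Λ a k σ₁ * _ = mpsRW χ Γ Λ a k σ₂ * _
      rw [mpsRW_congr a k (fun n h1 h2 => h n h1 (by omega)), h (a+k) (by omega) (by omega)]

lemma mcast_B {m n : ℕ} (h : m = n) (s : Fin d) :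
    mcast (congrArg χ h) (congrArg χ (congrArg (· + 1) h)) (Γ m s * Λ (m+1)) =
      Γ n s * Λ (n+1) := by
  subst h; rfl

lemma mpsRW_peel (a : ℕ) : ∀ (k : ℕ) (σ : ℕ → Fin d),
    mpsRW χ Γ Λ a (k+1) σ =
      (Γ a (σ a) * Λ (a+1)) *
        mcast rfl (congrArg χ (Nat.succ_add a k)) (mpsRW χ Γ Λ (a+1) k σ)
  | 0, σ => by
      show (1 : Matrix (Fin (χ a)) (Fin (χ a)) ℂ) * (Γ a (σ a) * Λ (a+1)) = _
      rw [show mpsRW χ Γ Λ (a+1) 0 σ = 1 from rfl, Matrix.one_mul, mcast_rfl, Matrix.mul_one]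
  | (k+1), σ => by
      show mpsRW χ Γ Λ a (k+1) σ * (Γ (a+(k+1)) (σ (a+(k+1))) * Λ (a+(k+1)+1)) = _
      rw [mpsRW_peel a k σ]
      show _ = (Γ a (σ a) * Λ (a+1)) *
        mcast rfl (congrArg χ (Nat.succ_add a (k+1)))
          (mpsRW χ Γ Λ (a+1) k σ * (Γ (a+1+k) (σ (a+1+k)) * Λ (a+1+k+1)))
      rw [mcast_mul rfl (congrArg χ (Nat.succ_add a k)) (congrArg χ (Nat.succ_add a (k+1)))]
      rw [Matrix.mul_assoc]
      congr 1
      congr 1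
      have e : a + 1 + k = a + k + 1 := Nat.succ_add a k
      rw [show σ (a + 1 + k) = σ (a + (k+1)) from congrArg σ (by omega)]
      exact (mcast_B χ Γ Λ e (σ (a + (k+1)))).symm

variable [NeZero d]

noncomputable def mpsR' (a m : ℕ) (τ : Fin m → Fin d) :
    Matrix (Fin (χ a)) (Fin (χ (a + m))) ℂ :=
  mpsRW χ Γ Λ a m (fun n => if h : n - a < m then τ ⟨n - a, h⟩ else 0)

lemma mpsLW_succ (i : ℕ) (σ : ℕ → Fin d) :
    mpsLW χ Γ Λ (i+1) σ = mpsLW χ Γ Λ i σ * (Λ i * Γ i (σ i)) := rfl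

lemma mpsL_snoc (i : ℕ) (τ : Fin i → Fin d) (s : Fin d) :
    mpsL χ Γ Λ (i+1) (Fin.snoc τ s) = mpsL χ Γ Λ i τ * (Λ i * Γ i s) := by
  simp only [mpsL]
  rw [mpsLW_succ]
  have h1 : (if h : i < i + 1 then (Fin.snoc τ s : Fin (i+1) → Fin d) ⟨i, h⟩ else (0 : Fin d)) = s := by
    rw [dif_pos (by omega)]
    exact Fin.snoc_last (α := fun _ : Fin (i+1) => Fin d) (p := τ) (x := s)
  rw [h1, mpsLW_congr χ Γ Λ i (σ₂ := fun k => if h : k < i then τ ⟨k, h⟩ else 0)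
    (fun n hn => by
      show (if h : n < i + 1 then (Fin.snoc τ s : Fin (i+1) → Fin d) ⟨n, h⟩ else 0) =
        (if h : n < i then τ ⟨n, h⟩ else 0)
      rw [dif_pos (by omega : n < i + 1), dif_pos hn]
      exact Fin.snoc_castSucc (α := fun _ : Fin (i+1) => Fin d) (p := τ) (x := s) (i := ⟨n, hn⟩))]

lemma sum_L_succ (i : ℕ) :
    ∑ σ : Fin (i+1) → Fin d, (mpsL χ Γ Λ (i+1) σ)ᴴ * mpsL χ Γ Λ (i+1) σ =
      ∑ s : Fin d, (Λ i * Γ i s)ᴴ *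
        (∑ τ : Fin i → Fin d, (mpsL χ Γ Λ i τ)ᴴ * mpsL χ Γ Λ i τ) * (Λ i * Γ i s) := by
  rw [← (Fin.snocEquiv (fun _ => Fin d)).sum_comp
      (fun σ => (mpsL χ Γ Λ (i+1) σ)ᴴ * mpsL χ Γ Λ (i+1) σ), Fintype.sum_prod_type]
  refine Finset.sum_congr rfl fun s _ => ?_
  rw [Matrix.mul_sum, Matrix.sum_mul]
  refine Finset.sum_congr rfl fun τ _ => ?_
  have : mpsL χ Γ Λ (i+1) (Fin.snocEquiv (fun _ => Fin d) (s, τ)) =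
      mpsL χ Γ Λ i τ * (Λ i * Γ i s) := by
    have h2 : (Fin.snocEquiv (fun _ : Fin (i+1) => Fin d) (s, τ)) = Fin.snoc τ s := by
      funext j; rfl
    rw [h2, mpsL_snoc]
  rw [this, conjTranspose_mul, Matrix.mul_assoc, Matrix.mul_assoc, Matrix.mul_assoc]

lemma sum_L (hΛ0 : Λ 0 = 1) : ∀ i : ℕ,
    (∀ j < i, ∑ s : Fin d, (Λ j * Γ j s)ᴴ * (Λ j * Γ j s) = 1) →
    ∑ σ : Fin i → Fin d, (mpsL χ Γ Λ i σ)ᴴ * mpsL χ Γ Λ i σ = 1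
  | 0, _ => by
      simp [mpsL, mpsLW, hΛ0]
  | (i+1), h => by
      rw [sum_L_succ]
      have := sum_L hΛ0 i (fun j hj => h j (by omega))
      simp only [this, Matrix.mul_one]
      exact h i (by omega)

end MPSAux

namespace MPSAux

variable {d : ℕ} (χ : ℕ → ℕ)
  (Γ : (i : ℕ) → Fin d → Matrix (Fin (χ i)) (Fin (χ (i + 1))) ℂ)
  (Λ : (i : ℕ) → Matrix (Fin (χ i)) (Fin (χ i)) ℂ)

lemma sandwich {p q r : ℕ} (B : Matrix (Fin p) (Fin q) ℂ) (X : Matrix (Fin q) (Fin r) ℂ) :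
    (B * X) * (B * X)ᴴ = B * (X * Xᴴ) * Bᴴ := by
  rw [conjTranspose_mul, Matrix.mul_assoc, ← Matrix.mul_assoc X, ← Matrix.mul_assoc]

lemma mpsRW_succ (a k : ℕ) (σ : ℕ → Fin d) :
    mpsRW χ Γ Λ a (k+1) σ = mpsRW χ Γ Λ a k σ * (Γ (a + k) (σ (a + k)) * Λ (a + k + 1)) := rfl

variable [NeZero d]

lemma mpsR'_snoc (a k : ℕ) (τ : Fin k → Fin d) (s : Fin d) :
    mpsR' χ Γ Λ a (k+1) (Fin.snoc τ s) = mpsR' χ Γ Λ a k τ * (Γ (a+k) s * Λ (a+k+1)) := by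
  simp only [mpsR']
  rw [mpsRW_succ]
  have h1 : ∀ hh : a + k - a < k + 1,
      (Fin.snoc τ s : Fin (k+1) → Fin d) ⟨a + k - a, hh⟩ = s := fun hh => by
    rw [show (⟨a + k - a, hh⟩ : Fin (k+1)) = Fin.last k from by
      apply Fin.ext; simp]
    exact Fin.snoc_last (α := fun _ : Fin (k+1) => Fin d) (p := τ) (x := s)
  rw [dif_pos (by omega : a + k - a < k + 1), h1,
    mpsRW_congr χ Γ Λ a k (σ₂ := fun n => if h : n - a < k then τ ⟨n - a, h⟩ else 0)
    (fun n ha hn => by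
      show (if h : n - a < k + 1 then (Fin.snoc τ s : Fin (k+1) → Fin d) ⟨n - a, h⟩ else 0) =
        (if h : n - a < k then τ ⟨n - a, h⟩ else 0)
      rw [dif_pos (by omega : n - a < k + 1), dif_pos (show n - a < k by omega)]
      exact Fin.snoc_castSucc (α := fun _ : Fin (k+1) => Fin d) (p := τ) (x := s)
        (i := ⟨n - a, by omega⟩))]

lemma sum_R'_snoc (a k : ℕ) :
    ∑ τ : Fin (k+1) → Fin d, mpsR' χ Γ Λ a (k+1) τ * (mpsR' χ Γ Λ a (k+1) τ)ᴴ =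
      ∑ τ' : Fin k → Fin d, mpsR' χ Γ Λ a k τ' *
        (∑ s : Fin d, (Γ (a+k) s * Λ (a+k+1)) * (Γ (a+k) s * Λ (a+k+1))ᴴ) *
          (mpsR' χ Γ Λ a k τ')ᴴ := by
  rw [← (Fin.snocEquiv (fun _ => Fin d)).sum_comp
      (fun τ => mpsR' χ Γ Λ a (k+1) τ * (mpsR' χ Γ Λ a (k+1) τ)ᴴ), Fintype.sum_prod_type,
      Finset.sum_comm]
  refine Finset.sum_congr rfl fun τ' _ => ?_
  rw [Matrix.mul_sum, Matrix.sum_mul]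
  refine Finset.sum_congr rfl fun s _ => ?_
  have h2 : mpsR' χ Γ Λ a (k+1) (Fin.snocEquiv (fun _ => Fin d) (s, τ')) =
      mpsR' χ Γ Λ a k τ' * (Γ (a+k) s * Λ (a+k+1)) := by
    rw [show (Fin.snocEquiv (fun _ : Fin (k+1) => Fin d) (s, τ')) = Fin.snoc τ' s from
      funext fun j => rfl, mpsR'_snoc]
  rw [h2, sandwich]

lemma sum_R' (a : ℕ) : ∀ k : ℕ,
    (∀ j, a ≤ j → j < a + k →
      ∑ s : Fin d, (Γ j s * Λ (j+1)) * (Γ j s * Λ (j+1))ᴴ = 1) →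
    ∑ τ : Fin k → Fin d, mpsR' χ Γ Λ a k τ * (mpsR' χ Γ Λ a k τ)ᴴ = 1
  | 0, _ => by
      simp [mpsR', mpsRW]
  | (k+1), h => by
      rw [sum_R'_snoc, ]
      have hB := h (a + k) (by omega) (by omega)
      simp only [hB, Matrix.mul_one]
      exact sum_R' a k (fun j h1 h2 => h j h1 (by omega))

lemma mpsR'_cons (a k : ℕ) (τ : Fin (k+1) → Fin d) :
    mpsR' χ Γ Λ a (k+1) τ = (Γ a (τ 0) * Λ (a+1)) *
      mcast rfl (congrArg χ (Nat.succ_add a k))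
        (mpsR' χ Γ Λ (a+1) k (fun j => τ j.succ)) := by
  simp only [mpsR']
  rw [mpsRW_peel]
  have h1 : ∀ hh : a - a < k + 1, τ ⟨a - a, hh⟩ = τ 0 := fun hh => by
    rw [show (⟨a - a, hh⟩ : Fin (k+1)) = 0 from by apply Fin.ext; simp]
  rw [dif_pos (by omega : a - a < k + 1), h1,
    mpsRW_congr χ Γ Λ (a+1) k
      (σ₂ := fun n => if h : n - (a+1) < k then (fun j : Fin k => τ j.succ) ⟨n - (a+1), h⟩ else 0)
      (fun n ha hn => by
        show (if h : n - a < k + 1 then τ ⟨n - a, h⟩ else 0) =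
          (if h : n - (a+1) < k then τ (Fin.succ ⟨n - (a+1), h⟩) else 0)
        rw [dif_pos (by omega : n - a < k + 1), dif_pos (show n - (a+1) < k by omega)]
        congr 1
        apply Fin.ext
        simp [Fin.val_succ]
        omega)]

lemma sum_R'_cons (a k : ℕ) :
    ∑ τ : Fin (k+1) → Fin d, mpsR' χ Γ Λ a (k+1) τ * (mpsR' χ Γ Λ a (k+1) τ)ᴴ =
      ∑ s : Fin d, (Γ a s * Λ (a+1)) *
        (∑ τ' : Fin k → Fin d, mpsR' χ Γ Λ (a+1) k τ' * (mpsR' χ Γ Λ (a+1) k τ')ᴴ) *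
          (Γ a s * Λ (a+1))ᴴ := by
  rw [← (Fin.consEquiv (fun _ => Fin d)).sum_comp
      (fun τ => mpsR' χ Γ Λ a (k+1) τ * (mpsR' χ Γ Λ a (k+1) τ)ᴴ), Fintype.sum_prod_type]
  refine Finset.sum_congr rfl fun s _ => ?_
  rw [Matrix.mul_sum, Matrix.sum_mul]
  refine Finset.sum_congr rfl fun τ' _ => ?_
  have h2 : mpsR' χ Γ Λ a (k+1) (Fin.consEquiv (fun _ => Fin d) (s, τ')) =
      (Γ a s * Λ (a+1)) * mcast rfl (congrArg χ (Nat.succ_add a k)) (mpsR' χ Γ Λ (a+1) k τ') := by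
    rw [show (Fin.consEquiv (fun _ : Fin (k+1) => Fin d) (s, τ')) = Fin.cons s τ' from rfl,
      mpsR'_cons]
    have e0 : (Fin.cons s τ' : Fin (k+1) → Fin d) 0 = s := Fin.cons_zero (α := fun _ : Fin (k+1) => Fin d) s τ'
    have e1 : (fun j : Fin k => (Fin.cons s τ' : Fin (k+1) → Fin d) j.succ) = τ' :=
      funext fun j => Fin.cons_succ (α := fun _ : Fin (k+1) => Fin d) s τ' j
    rw [e0, e1]
  rw [h2, sandwich, mcast_mul_conjTranspose_self]

end MPSAux


/-- equivalent characterization of the canonical form used in the proof of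
Theorem 4 of the paper: the MPS is in canonical form if and only if for every bond
`i ∈ {0, 1, …, N}` the left tensors satisfy `∑ (L^{[i]})ᴴ L^{[i]} = 1` and the right tensors
satisfy `∑ R^{[i]} (R^{[i]})ᴴ = 1`. -/
theorem isCanonicalMPS_iff_left_right_isometries
    (N d : ℕ) [NeZero d] (hN : 1 ≤ N)
    (χ : ℕ → ℕ) (hχ0 : χ 0 = 1) (hχN : χ N = 1) (hχpos : ∀ i, 1 ≤ χ i)
    (Γ : (i : ℕ) → Fin d → Matrix (Fin (χ i)) (Fin (χ (i + 1))) ℂ)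
    (Λ : (i : ℕ) → Matrix (Fin (χ i)) (Fin (χ i)) ℂ)
    (hΛ0 : Λ 0 = 1) (hΛN : Λ N = 1)
    (hΛdiag : ∀ i ≤ N, (Λ i).IsDiag)
    (hΛreal : ∀ i ≤ N, ∀ α, (Λ i α α).im = 0 ∧ 0 ≤ (Λ i α α).re)
    (hΛdesc : ∀ i ≤ N, ∀ α β : Fin (χ i), α ≤ β → (Λ i β β).re ≤ (Λ i α α).re) :
    IsCanonicalMPS N χ Γ Λ ↔
      ∀ i ≤ N,
        (∑ σ : Fin i → Fin d, (mpsL χ Γ Λ i σ)ᴴ * mpsL χ Γ Λ i σ = 1) ∧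
        (∑ τ : Fin (N - i) → Fin d, mpsR χ Γ Λ N i τ * (mpsR χ Γ Λ N i τ)ᴴ = 1) := by
  constructor
  · intro hc i hi
    refine ⟨MPSAux.sum_L χ Γ Λ hΛ0 i (fun j hj => (hc j (by omega)).1), ?_⟩
    show ∑ τ : Fin (N - i) → Fin d,
      MPSAux.mpsR' χ Γ Λ i (N - i) τ * (MPSAux.mpsR' χ Γ Λ i (N - i) τ)ᴴ = 1
    exact MPSAux.sum_R' χ Γ Λ i (N - i) (fun j h1 h2 => (hc j (by omega)).2)
  · intro h i hi
    constructor
    · have hLi := (h i (by omega)).1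
      have hLi1 := (h (i+1) (by omega)).1
      rw [MPSAux.sum_L_succ χ Γ Λ i] at hLi1
      simp only [hLi, Matrix.mul_one] at hLi1
      exact hLi1
    · have hRi : ∑ τ : Fin (N - i) → Fin d,
          MPSAux.mpsR' χ Γ Λ i (N - i) τ * (MPSAux.mpsR' χ Γ Λ i (N - i) τ)ᴴ = 1 :=
        (h i (by omega)).2
      have hRi1 : ∑ τ : Fin (N - (i+1)) → Fin d,
          MPSAux.mpsR' χ Γ Λ (i+1) (N - (i+1)) τ *
            (MPSAux.mpsR' χ Γ Λ (i+1) (N - (i+1)) τ)ᴴ = 1 :=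
        (h (i+1) (by omega)).2
      have hk : N - i = (N - (i+1)) + 1 := by omega
      rw [hk] at hRi
      rw [MPSAux.sum_R'_cons] at hRi
      simp only [hRi1, Matrix.mul_one] at hRi
      exact hRi
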